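/- arXiv:1012.4054 — 2 statements merged into one kernel-verified Lean document; each statement's English description precedes it below -/
import Mathlib

section
/- Let h be the Peterson Hessenberg function h'(i) = i+1 for 1 ≤ i ≤ n-1 and h'(n) = n. A permutation w ∈ S_n is an h'-permissible filling of the one-row diagram with n boxes if and only if the one-line notation of w is an increasing sequence of decreasing staircases, i.e., w is a concatenation of blocks, each of the form (k, k-1, ..., j), where each entry of a block is smaller than every entry of any later block. -/
open Equiv Finset

open Fin.NatCast in
/-- The simple transposition `s_i = (i, i+1)` (1-indexed letters), as a
permutation of `Fin n` (0-indexed letters `i-1`, `i`). -/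
def sT (n : ℕ) [NeZero n] (i : ℕ) : Equiv.Perm (Fin n) :=
  Equiv.swap ((i - 1 : ℕ) : Fin n) ((i : ℕ) : Fin n)

/-- The Bruhat length of a permutation: its number of inversions. -/
def lenP (n : ℕ) (w : Equiv.Perm (Fin n)) : ℕ :=
  (Finset.univ.filter (fun p : Fin n × Fin n => p.1 < p.2 ∧ w p.2 < w p.1)).card

/-- Bruhat order on `S_n`: the reflexive-transitive closure of
"multiply on the right by a transposition and increase length". -/
def bruhatLE (n : ℕ) (u w : Equiv.Perm (Fin n)) : Prop :=
  Relation.ReflTransGen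
    (fun a b => (∃ i j : Fin n, i ≠ j ∧ b = a * Equiv.swap i j) ∧ lenP n a < lenP n b) u w

/-- `u_ℓ(x) = s_{ℓ-1} s_{ℓ-2} ⋯ s_{ℓ-x_ℓ}` (identity if `x_ℓ = 0`). -/
def uPerm (n : ℕ) [NeZero n] (ℓ m : ℕ) : Equiv.Perm (Fin n) :=
  ((List.range m).map (fun t => sT n (ℓ - 1 - t))).prod

/-- `ω(x) = u_2(x) u_3(x) ⋯ u_n(x)`. -/
def omegaPerm (n : ℕ) [NeZero n] (x : ℕ → ℕ) : Equiv.Perm (Fin n) :=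
  ((List.range (n - 1)).map (fun k => uPerm n (k + 2) (x (k + 2)))).prod

/-- A permutation `w ∈ S_n`, viewed as a filling of the one-row diagram with
`n` boxes via its one-line notation `(w(1), …, w(n))` (letters `1, …, n`
encoded as `Fin n`), is `h`-permissible if every horizontal adjacency with `k`
immediately left of `j` satisfies `k ≤ h(j)`. -/
def IsPermissible (n : ℕ) (h : ℕ → ℕ) (w : Equiv.Perm (Fin n)) : Prop :=
  ∀ i : Fin n, ∀ hi : (i : ℕ) + 1 < n,
    (w i : ℕ) + 1 ≤ h ((w ⟨(i : ℕ) + 1, hi⟩ : ℕ) + 1)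

/-- The 334-type Hessenberg function: `h(1) = h(2) = 3`, `h(i) = i + 1` for
`3 ≤ i ≤ n - 1`, and `h(n) = n`. -/
def h334 (n i : ℕ) : ℕ := if i ≤ 2 then 3 else min (i + 1) n

/-- The Peterson Hessenberg function: `h'(i) = i + 1` for `i ≤ n - 1`,
`h'(n) = n`. -/
def hPet (n i : ℕ) : ℕ := min (i + 1) n

/-- The one-line notation of `w ∈ S_n`, as a list of the letters `1, …, n`. -/
def oneLine (n : ℕ) (w : Equiv.Perm (Fin n)) : List ℕ :=
  List.ofFn fun i : Fin n => (w i : ℕ) + 1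

/-- A decreasing staircase: each entry is exactly one less than the previous. -/
def IsDecStair (l : List ℕ) : Prop := List.Chain' (fun a b => b + 1 = a) l

/-- An increasing sequence of (nonempty) decreasing staircases: a concatenation
of decreasing staircase blocks in which every entry of each block is smaller
than every entry of every later block. -/
def IsIncStaircases (l : List ℕ) : Prop :=
  ∃ blocks : List (List ℕ), l = blocks.flatten ∧
    (∀ b ∈ blocks, b ≠ [] ∧ IsDecStair b) ∧
    List.Pairwise (fun b1 b2 => ∀ a ∈ b1, ∀ c ∈ b2, a < c) blocks

lemma stair_lt : ∀ (r : List ℕ) (a b : ℕ), IsDecStair (b :: r) → a < b →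
    a ∉ b :: r → ∀ x ∈ b :: r, a < x := by
  intro r
  induction r with
  | nil =>
    intro a b _ hab _ x hx
    simp only [List.mem_singleton] at hx
    omega
  | cons c r ih =>
    intro a b hs hab hna x hx
    have hcb : c + 1 = b := (List.isChain_cons_cons.mp hs).1
    have hs' : IsDecStair (c :: r) := (List.isChain_cons_cons.mp hs).2
    have hac : a < c := by
      have : a ≠ c := fun h => hna (by simp [h])
      omega
    rcases List.mem_cons.mp hx with h | h
    · omega
    · exact ih a c hs' hac (fun h' => hna (List.mem_cons_of_mem _ h')) x h

lemma chain_to_stairs : ∀ l : List ℕ, l.Nodup →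
    List.Chain' (fun a b => a ≤ b + 1) l → IsIncStaircases l := by
  intro l
  induction l with
  | nil => exact fun _ _ => ⟨[], by simp, by simp, by simp⟩
  | cons a t ih =>
    intro hnd hch
    have hat : a ∉ t := (List.nodup_cons.mp hnd).1
    obtain ⟨blocks, hfl, hblk, hpw⟩ :=
      ih (List.nodup_cons.mp hnd).2 hch.tail
    cases t with
    | nil => exact ⟨[[a]], by simp, by simp [IsDecStair, List.Chain'], by simp⟩
    | cons b t' =>
      have hab : a ≤ b + 1 := (List.isChain_cons_cons.mp hch).1
      obtain ⟨B, rest, rfl⟩ : ∃ B rest, blocks = B :: rest := by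
        cases blocks with
        | nil => simp at hfl
        | cons B rest => exact ⟨B, rest, rfl⟩
      have hBne := (hblk B (by simp)).1
      have hBst := (hblk B (by simp)).2
      rw [List.flatten_cons] at hfl
      obtain ⟨B', rfl⟩ : ∃ B', B = b :: B' := by
        cases B with
        | nil => exact absurd rfl hBne
        | cons x B' =>
          simp only [List.cons_append, List.cons.injEq] at hfl
          exact ⟨B', by rw [hfl.1]⟩
      have ht' : t' = B' ++ rest.flatten := by
        simpa using hfl
      have hmemB : ∀ x ∈ b :: B', x ∈ b :: t' := by
        intro x hx
        rcases List.mem_cons.mp hx with h | h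
        · simp [h]
        · exact List.mem_cons_of_mem _ (by rw [ht']; exact List.mem_append_left _ h)
      have hmemrest : ∀ c2 ∈ rest, ∀ c ∈ c2, c ∈ b :: t' := by
        intro c2 hc2 c hc
        refine List.mem_cons_of_mem _ ?_
        rw [ht']
        exact List.mem_append_right _ (List.mem_flatten.mpr ⟨c2, hc2, hc⟩)
      have hpw1 : ∀ b2 ∈ rest, ∀ x ∈ b :: B', ∀ c ∈ b2, x < c :=
        (List.pairwise_cons.mp hpw).1
      have hpw2 := (List.pairwise_cons.mp hpw).2
      have hanb : a ≠ b := fun h => hat (by simp [h])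
      rcases Nat.lt_or_ge a b with hlt | hge
      · -- new singleton block
        refine ⟨[a] :: (b :: B') :: rest, by simp [hfl], ?_, ?_⟩
        · intro c hc
          rcases List.mem_cons.mp hc with h | h
          · subst h; exact ⟨by simp, by simp [IsDecStair, List.Chain']⟩
          · exact hblk c h
        · refine List.pairwise_cons.mpr ⟨?_, hpw⟩
          intro b2 hb2 x hx c hc
          simp only [List.mem_singleton] at hx
          subst hx
          rcases List.mem_cons.mp hb2 with h | h
          · subst h
            exact stair_lt B' x b hBst hlt (fun h' => hat (hmemB x h')) c hc
          · exact lt_trans hlt (hpw1 b2 h b (by simp) c hc)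
      · -- a = b + 1 : prepend to first block
        have hab' : a = b + 1 := by omega
        refine ⟨(a :: b :: B') :: rest, by simp [hfl], ?_, ?_⟩
        · intro c hc
          rcases List.mem_cons.mp hc with h | h
          · subst h
            exact ⟨by simp, List.isChain_cons_cons.mpr ⟨hab'.symm, hBst⟩⟩
          · exact hblk c (List.mem_cons_of_mem _ h)
        · refine List.pairwise_cons.mpr ⟨?_, hpw2⟩
          intro b2 hb2 x hx c hc
          rcases List.mem_cons.mp hx with h | h
          · subst h
            have hbc : b < c := hpw1 b2 hb2 b (by simp) c hc
            have : x ≠ c := fun h' => hat (h' ▸ hmemrest b2 hb2 c hc)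
            omega
          · exact hpw1 b2 hb2 x h c hc

lemma stairs_to_chain : ∀ blocks : List (List ℕ),
    (∀ b ∈ blocks, b ≠ [] ∧ IsDecStair b) →
    List.Pairwise (fun b1 b2 => ∀ a ∈ b1, ∀ c ∈ b2, a < c) blocks →
    List.Chain' (fun a b => a ≤ b + 1) blocks.flatten := by
  intro blocks
  induction blocks with
  | nil => intro _ _; simp [List.Chain']
  | cons B rest ih =>
    intro hblk hpw
    rw [List.flatten_cons]
    refine List.isChain_append.mpr ⟨?_, ?_, ?_⟩
    · exact ((hblk B (by simp)).2).imp (fun h => by omega)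
    · exact ih (fun b hb => hblk b (List.mem_cons_of_mem _ hb)) (List.pairwise_cons.mp hpw).2
    · intro x hx y hy
      have hxB : x ∈ B := List.mem_of_mem_getLast? hx
      have hyf : y ∈ rest.flatten := List.mem_of_mem_head? hy
      obtain ⟨b2, hb2, hyb2⟩ := List.mem_flatten.mp hyf
      have := (List.pairwise_cons.mp hpw).1 b2 hb2 x hxB y hyb2
      omega

lemma perm_chain (n : ℕ) [NeZero n] (w : Equiv.Perm (Fin n)) :
    IsPermissible n (hPet n) w ↔
    List.Chain' (fun a b => a ≤ b + 1) (oneLine n w) := by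
  rw [List.Chain', List.isChain_iff_getElem]
  constructor
  · intro hp i hi
    simp only [oneLine, List.length_ofFn] at hi
    have hi' : i + 1 < n := by omega
    have := hp ⟨i, by omega⟩ hi'
    simp only [hPet, le_min_iff] at this
    simp only [oneLine, List.getElem_ofFn]
    have h1 := this.1
    convert_to (w ⟨i, by omega⟩ : ℕ) + 1 ≤ (w ⟨i + 1, hi'⟩ : ℕ) + 1 + 1
    omega
  · intro hc i hi
    have hi' : (i : ℕ) + 1 < (oneLine n w).length := by
      simp only [oneLine, List.length_ofFn]; omega
    have := hc i hi'
    simp only [oneLine, List.getElem_ofFn, Fin.cast] at this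
    simp only [hPet, le_min_iff]
    constructor
    · have h1 : (w ⟨(i : ℕ), by omega⟩ : ℕ) + 1 ≤ (w ⟨(i : ℕ) + 1, by omega⟩ : ℕ) + 1 + 1 := this
      have : (⟨(i : ℕ), by omega⟩ : Fin n) = i := by ext; rfl
      rw [this] at h1
      omega
    · have := (w ⟨(i : ℕ) + 1, hi⟩).isLt
      have := (w i).isLt
      omega

/-- A permutation `w ∈ S_n` is a permissible filling of the one-row diagram for
the Peterson Hessenberg function iff its one-line notation is an increasing
sequence of decreasing staircases. -/
theorem stmt6 (n : ℕ) [NeZero n] (w : Equiv.Perm (Fin n)) :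
    IsPermissible n (hPet n) w ↔ IsIncStaircases (oneLine n w) := by
  rw [perm_chain]
  constructor
  · intro hc
    refine chain_to_stairs _ ?_ hc
    rw [oneLine, List.nodup_ofFn]
    intro i j hij
    simp only [add_left_inj] at hij
    exact w.injective (Fin.ext hij)
  · rintro ⟨blocks, hfl, hblk, hpw⟩
    rw [hfl]
    exact stairs_to_chain blocks hblk hpw
end

section
/- For the 334-type Hessenberg function h (h(1)=h(2)=3, h(i)=i+1 for 3 ≤ i ≤ n-1, h(n)=n), every h-permissible filling w of the one-row diagram which is not permissible for the Peterson Hessenberg function is exactly one of: (a) of the form w' 3 1 2 w'' where w' is a (possibly empty) decreasing staircase such that w'3 is a staircase and w'' is an increasing sequence of staircases, or (b) of the form 2 w' 3 1 w'' with w', w'' as in (a). -/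
open Equiv Finset

lemma decStair_getLast_le : ∀ {s : List ℕ}, IsDecStair s → ∀ {m : ℕ},
    s.getLast? = some m → ∀ x ∈ s, m ≤ x := by
  intro s
  induction s with
  | nil => intro _ m hm; simp at hm
  | cons a t ih =>
    intro hs m hm x hx
    rcases t with _ | ⟨b, t'⟩
    · simp at hm hx; omega
    · have h1 : b + 1 = a := (List.isChain_cons_cons.mp hs).1
      have hm' : (b :: t').getLast? = some m := by
        rw [List.getLast?_cons_cons] at hm; exact hm
      have ih' := ih (List.isChain_cons_cons.mp hs).2 hm'
      rcases List.mem_cons.mp hx with rfl | hx'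
      · have := ih' b (by simp); omega
      · exact ih' x hx'

lemma decStair_mem : ∀ {s : List ℕ}, IsDecStair s → ∀ {m : ℕ}, s.getLast? = some m →
    ∀ {a : ℕ}, s.head? = some a → ∀ {y : ℕ}, m ≤ y → y ≤ a → y ∈ s := by
  intro s
  induction s with
  | nil => intro _ m hm; simp at hm
  | cons c t ih =>
    intro hs m hm a ha y h1 h2
    have hac : a = c := by simp at ha; omega
    subst hac
    rcases t with _ | ⟨b, t'⟩
    · simp at hm ⊢; omega
    · have hba : b + 1 = a := (List.isChain_cons_cons.mp hs).1
      by_cases hy : y = a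
      · simp [hy]
      · have hyb : y ≤ b := by omega
        have hm' : (b :: t').getLast? = some m := by
          rw [List.getLast?_cons_cons] at hm; exact hm
        exact List.mem_cons_of_mem _
          (ih (List.isChain_cons_cons.mp hs).2 hm' rfl h1 hyb)

lemma chain'_imp_mem {α : Type*} {R S : α → α → Prop} :
    ∀ {l : List α}, l.Chain' R → (∀ a ∈ l, ∀ b ∈ l, R a b → S a b) → l.Chain' S := by
  intro l
  induction l with
  | nil => intro _ _; exact List.isChain_nil
  | cons a t ih =>
    intro h hm
    rcases t with _ | ⟨b, t'⟩
    · simp [List.Chain']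
    · simp only [List.Chain', List.isChain_cons_cons] at h ⊢
      exact ⟨hm a (by simp) b (by simp) h.1,
        ih h.2 (fun x hx y hy => hm x (List.mem_cons_of_mem _ hx) y (List.mem_cons_of_mem _ hy))⟩

lemma lemA : ∀ {M : List ℕ}, M.Nodup → M.Chain' (fun a b => a ≤ b + 1) →
    IsIncStaircases M := by
  intro M
  induction M with
  | nil => intro _ _; exact ⟨[], by simp, by simp, List.Pairwise.nil⟩
  | cons a rest ih =>
    intro hnd hch
    rcases rest with _ | ⟨b, rest'⟩
    · exact ⟨[[a]], by simp, by simp [IsDecStair, List.Chain'], by simp⟩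
    · have hab : a ≤ b + 1 := (List.isChain_cons_cons.mp hch).1
      have hch' := (List.isChain_cons_cons.mp hch).2
      have hanotin : a ∉ b :: rest' := (List.nodup_cons.mp hnd).1
      obtain ⟨B, hfl, hblocks, hpw⟩ := ih (List.nodup_cons.mp hnd).2 hch'
      rcases B with _ | ⟨B0, B'⟩
      · simp at hfl
      have hB0ne : B0 ≠ [] := (hblocks B0 (by simp)).1
      rcases B0 with _ | ⟨c, B0t⟩
      · exact absurd rfl hB0ne
      have hfl' : b :: rest' = c :: (B0t ++ B'.flatten) := by simpa using hfl
      have hcb : b = c := by injection hfl'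
      subst hcb
      have hrest' : rest' = B0t ++ B'.flatten := by injection hfl'
      have hpw' := List.pairwise_cons.mp hpw
      have hstair0 : IsDecStair (b :: B0t) := (hblocks _ (by simp)).2
      by_cases hd : a = b + 1
      · -- prepend to first block
        refine ⟨(a :: b :: B0t) :: B', by simp [hrest'], ?_, ?_⟩
        · intro blk hblk
          rcases List.mem_cons.mp hblk with rfl | hblk'
          · exact ⟨by simp, List.isChain_cons_cons.mpr ⟨hd.symm, hstair0⟩⟩
          · exact hblocks _ (List.mem_cons_of_mem _ hblk')
        · rw [List.pairwise_cons]
          refine ⟨?_, hpw'.2⟩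
          intro Y hY x hx cc hcc
          have hYold := hpw'.1 Y hY
          rcases List.mem_cons.mp hx with rfl | hx'
          · have hbc : b < cc := hYold b (by simp) cc hcc
            have hccmem : cc ∈ b :: rest' := by
              rw [hfl]; exact List.mem_flatten.mpr ⟨Y, List.mem_cons_of_mem _ hY, hcc⟩
            have : x ≠ cc := fun h => hanotin (h ▸ hccmem)
            omega
          · exact hYold x hx' cc hcc
      · -- new singleton block
        have halt : a < b := by
          have : a ≠ b := fun h => hanotin (h ▸ List.mem_cons_self)
          omega
        have hkey : ∀ cc ∈ b :: rest', a < cc := by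
          intro cc hcc
          rcases List.mem_cons.mp hcc with rfl | hcc'
          · exact halt
          rw [hrest'] at hcc'
          rcases List.mem_append.mp hcc' with hc1 | hc2
          · obtain ⟨m, hm⟩ : ∃ m, (b :: B0t).getLast? = some m :=
              ⟨_, List.getLast?_eq_getLast (by simp)⟩
            have hmle := decStair_getLast_le hstair0 hm cc (List.mem_cons_of_mem _ hc1)
            by_cases hma : m ≤ a
            · have : a ∈ b :: B0t := decStair_mem hstair0 hm rfl hma (le_of_lt halt)
              exact absurd (by rw [hfl]; exact List.mem_flatten.mpr ⟨_, by simp, this⟩) hanotin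
            · omega
          · obtain ⟨Y, hY, hccY⟩ := List.mem_flatten.mp hc2
            have := hpw'.1 Y hY b (by simp) cc hccY
            omega
        refine ⟨[a] :: (b :: B0t) :: B', by simp [hrest'], ?_, ?_⟩
        · intro blk hblk
          rcases List.mem_cons.mp hblk with rfl | hblk'
          · exact ⟨by simp, by simp [IsDecStair, List.Chain']⟩
          · exact hblocks _ hblk'
        · rw [List.pairwise_cons]
          refine ⟨?_, hpw⟩
          intro Y hY x hx cc hcc
          have hx' : x = a := by simpa using hx
          subst hx'
          apply hkey
          have : cc ∈ ((b :: B0t) :: B').flatten := List.mem_flatten.mpr ⟨Y, hY, hcc⟩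
          rw [← hfl] at this
          exact this

lemma lemB : ∀ (Q : List ℕ) (v : ℕ), Q.Nodup → (∀ x ∈ Q, v + 1 ≤ x) →
    (Q ++ [v]).Chain' (fun a b => a ≤ b + 1) → IsDecStair (Q ++ [v]) := by
  intro Q
  induction Q using List.reverseRecOn with
  | nil => intro v _ _ _; simp [IsDecStair, List.Chain']
  | append_singleton Q' a ih =>
    intro v hnd hge hch
    obtain ⟨hch1, -, hjun⟩ := List.isChain_append.mp hch
    have hav : a ≤ v + 1 := by
      have := hjun a (by simp [List.getLast?_concat]) v (by simp)
      simpa using this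
    have ha : a = v + 1 := le_antisymm hav (hge a (by simp))
    subst ha
    have hndQ' : Q'.Nodup ∧ (v+1) ∉ Q' := by
      rw [List.nodup_append] at hnd
      exact ⟨hnd.1, fun h => hnd.2.2 _ h _ (by simp) rfl⟩
    have hstep : IsDecStair (Q' ++ [v + 1]) := by
      apply ih (v + 1) hndQ'.1
      · intro x hx
        have h1 := hge x (List.mem_append_left _ hx)
        have h2 : x ≠ v + 1 := fun h => hndQ'.2 (h ▸ hx)
        omega
      · exact hch1
    refine List.isChain_append.mpr ⟨hstep, by simp, ?_⟩
    intro x hx y hy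
    simp [List.getLast?_concat] at hx hy
    omega


lemma listMain (P S : List ℕ)
    (hnd : (P ++ 3 :: 1 :: S).Nodup)
    (hone : ∀ x ∈ P ++ 3 :: 1 :: S, 1 ≤ x)
    (h2m : 2 ∈ P ++ 3 :: 1 :: S)
    (hch : (P ++ 3 :: 1 :: S).Chain' (fun a b => a ≤ b + 1 ∨ (a = 3 ∧ b = 1))) :
    Xor'
      (∃ w1 w2 : List ℕ, P ++ 3 :: 1 :: S = w1 ++ [3, 1, 2] ++ w2 ∧
        IsDecStair (w1 ++ [3]) ∧ IsIncStaircases w2)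
      (∃ w1 w2 : List ℕ, P ++ 3 :: 1 :: S = [2] ++ w1 ++ [3, 1] ++ w2 ∧
        IsDecStair (w1 ++ [3]) ∧ IsIncStaircases w2) := by
  have hndP : P.Nodup := hnd.of_append_left
  have hndS : S.Nodup := (hnd.of_append_right).of_cons.of_cons
  have hdisj : ∀ x ∈ P, x ∉ (3 :: 1 :: S) := fun x hx =>
    (List.disjoint_of_nodup_append hnd) hx
  have h3P : 3 ∉ P := fun h => hdisj 3 h (by simp)
  have h1P : 1 ∉ P := fun h => hdisj 1 h (by simp)
  have h3S : 3 ∉ S := by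
    have := hnd.of_append_right
    rw [List.nodup_cons] at this
    exact fun h => this.1 (by simp [h])
  have h1S : 1 ∉ S := by
    have := (hnd.of_append_right).of_cons
    rw [List.nodup_cons] at this
    exact fun h => this.1 h
  have hchS : S.Chain' (fun a b => a ≤ b + 1) := by
    refine chain'_imp_mem (hch.suffix ⟨P ++ [3, 1], by simp⟩) ?_
    rintro a ha b hb (h | ⟨rfl, rfl⟩)
    · exact h
    · exact absurd ha h3S
  rcases List.mem_append.mp h2m with h2P | h2S
  · -- case B : 2 ∈ P, show P = 2 :: P2
    obtain ⟨P1, P2, rfl⟩ := List.append_of_mem h2P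
    have hP1 : P1 = [] := by
      rcases P1 with _ | ⟨p, P1'⟩
      · rfl
      · exfalso
        have hchP : ((p :: P1') ++ 2 :: P2).Chain' (fun a b => a ≤ b + 1 ∨ (a = 3 ∧ b = 1)) :=
          hch.prefix ⟨3 :: 1 :: S, by simp⟩
        obtain ⟨-, -, hj⟩ := List.isChain_append.mp hchP
        have hlast : (p :: P1').getLast (by simp) ∈ p :: P1' := List.getLast_mem _
        set q := (p :: P1').getLast (by simp) with hq
        have hrel := hj q (Option.mem_def.mpr (List.getLast?_eq_getLast (by simp))) 2 rfl
        have hle : q ≤ 3 := by rcases hrel with h | ⟨h, h'⟩ <;> omega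
        have hqP : q ∈ (p :: P1') ++ 2 :: P2 := List.mem_append_left _ hlast
        have hq1 : 1 ≤ q := hone q (List.mem_append_left _ hqP)
        have hqne1 : q ≠ 1 := fun h => h1P (h ▸ hqP)
        have hqne3 : q ≠ 3 := fun h => h3P (h ▸ hqP)
        have hqne2 : q ≠ 2 := by
          intro h
          have h2no : 2 ∉ p :: P1' := by
            have := List.disjoint_of_nodup_append hndP
            exact fun hm => this hm (by simp)
          exact h2no (h ▸ hlast)
        omega
    subst hP1
    simp only [List.nil_append] at hnd hone h2m hch hndP hdisj h3P h1P h2P ⊢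
    -- now P = 2 :: P2
    refine Or.inr ⟨⟨P2, S, by simp, ?_, lemA hndS hchS⟩, ?_⟩
    · -- IsDecStair (P2 ++ [3])
      apply lemB
      · exact (List.nodup_cons.mp hndP).2
      · intro x hx
        have hxm : x ∈ (2 :: P2) ++ 3 :: 1 :: S := by simp [hx]
        have hx1 : 1 ≤ x := hone x hxm
        have hx2 : x ≠ 2 := fun h => (List.nodup_cons.mp hndP).1 (h ▸ hx)
        have hx3 : x ≠ 3 := fun h => h3P (h ▸ List.mem_cons_of_mem _ hx)
        have hx1' : x ≠ 1 := fun h => h1P (h ▸ List.mem_cons_of_mem _ hx)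
        omega
      · refine chain'_imp_mem (R := fun a b => a ≤ b + 1 ∨ (a = 3 ∧ b = 1)) ?_ ?_
        · have ht : (P2 ++ 3 :: 1 :: S).Chain' (fun a b => a ≤ b + 1 ∨ (a = 3 ∧ b = 1)) := by
            have := hch.tail
            simpa [List.Chain'] using this
          exact ht.prefix ⟨1 :: S, by simp⟩
        · rintro a ha b hb (h | ⟨rfl, rfl⟩)
          · exact h
          · rcases List.mem_append.mp hb with hb' | hb'
            · exact absurd (List.mem_cons_of_mem _ hb') h1P
            · simp at hb'
    · -- ¬ form (a)
      rintro ⟨w1, w2, heq, -, -⟩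
      have heq' : 2 :: (P2 ++ 3 :: 1 :: S) = w1 ++ 3 :: 1 :: 2 :: w2 := by
        simpa using heq
      have hnd' : (w1 ++ 3 :: 1 :: 2 :: w2).Nodup := by
        rw [← heq']; simpa using hnd
      have h2w1 : 2 ∉ w1 := by
        have := List.disjoint_of_nodup_append hnd'
        exact fun h => this h (by simp)
      rcases w1 with _ | ⟨x, w1'⟩
      · simp at heq'
      · have hx2 : x = 2 := by
          have := congrArg List.head? heq'
          simpa using this.symm
        subst hx2
        exact h2w1 (by simp)
  · -- case A : 2 ∈ S
    have h2S' : 2 ∈ S := by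
      rcases List.mem_cons.mp h2S with h | h
      · omega
      rcases List.mem_cons.mp h with h | h
      · omega
      · exact h
    obtain ⟨S1, S2, rfl⟩ := List.append_of_mem h2S'
    have hS1 : S1 = [] := by
      rcases S1 with _ | ⟨p, S1'⟩
      · rfl
      · exfalso
        have hchS' : ((p :: S1') ++ 2 :: S2).Chain' (fun a b => a ≤ b + 1 ∨ (a = 3 ∧ b = 1)) :=
          hch.suffix ⟨P ++ [3, 1], by simp⟩
        obtain ⟨-, -, hj⟩ := List.isChain_append.mp hchS'
        have hlast : (p :: S1').getLast (by simp) ∈ p :: S1' := List.getLast_mem _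
        set q := (p :: S1').getLast (by simp) with hq
        have hrel := hj q (Option.mem_def.mpr (List.getLast?_eq_getLast (by simp))) 2 rfl
        have hle : q ≤ 3 := by rcases hrel with h | ⟨h, h'⟩ <;> omega
        have hqS : q ∈ (p :: S1') ++ 2 :: S2 := List.mem_append_left _ hlast
        have hq1 : 1 ≤ q := hone q (List.mem_append_right _
          (by simp only [List.mem_cons]; exact Or.inr (Or.inr hqS)))
        have hqne1 : q ≠ 1 := fun h => h1S (h ▸ hqS)
        have hqne3 : q ≠ 3 := fun h => h3S (h ▸ hqS)
        have hqne2 : q ≠ 2 := by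
          intro h
          have h2no : 2 ∉ p :: S1' := by
            have := List.disjoint_of_nodup_append hndS
            exact fun hm => this hm (by simp)
          exact h2no (h ▸ hlast)
        omega
    subst hS1
    simp only [List.nil_append] at hnd hone h2m hch hndS h3S h1S h2S hchS hdisj ⊢
    -- now S = 2 :: S2
    refine Or.inl ⟨⟨P, S2, by simp, ?_, lemA hndS.of_cons (hchS.tail)⟩, ?_⟩
    · -- IsDecStair (P ++ [3])
      apply lemB
      · exact hndP
      · intro x hx
        have hx1 : 1 ≤ x := hone x (List.mem_append_left _ hx)
        have hx3 : x ≠ 3 := fun h => h3P (h ▸ hx)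
        have hx1' : x ≠ 1 := fun h => h1P (h ▸ hx)
        have hx2 : x ≠ 2 := fun h => hdisj x hx (by simp [h])
        omega
      · refine chain'_imp_mem (R := fun a b => a ≤ b + 1 ∨ (a = 3 ∧ b = 1)) ?_ ?_
        · exact hch.prefix ⟨1 :: 2 :: S2, by simp⟩
        · rintro a ha b hb (h | ⟨rfl, rfl⟩)
          · exact h
          · rcases List.mem_append.mp hb with hb' | hb'
            · exact absurd hb' h1P
            · simp at hb'
    · -- ¬ form (b)
      rintro ⟨w1, w2, heq, -, -⟩
      -- heq : P ++ 3 :: 1 :: 2 :: S2 = 2 :: (w1 ++ [3,1] ++ w2)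
      rcases P with _ | ⟨p, P'⟩
      · have h32 : (3 : ℕ) = 2 := by
          have := congrArg List.head? heq
          simp at this
        omega
      · have hp2 : p = 2 := by
          have := congrArg List.head? heq
          simpa using this
        subst hp2
        exact hdisj 2 (by simp) (by simp)


/-- For the 334-type Hessenberg function, every permissible filling which is not
Peterson-permissible is of exactly one of the two forms: `w' 3 1 2 w''`
(312-type) or `2 w' 3 1 w''` (231-type), where `w'` is a possibly empty
decreasing staircase such that `w' 3` is a staircase and `w''` is an increasing
sequence of staircases. -/
theorem stmt7 (n : ℕ) (hn : 4 ≤ n) (w : Equiv.Perm (Fin n))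
    (hperm : IsPermissible n (h334 n) w) (hnot : ¬ IsPermissible n (hPet n) w) :
    Xor'
      (∃ w1 w2 : List ℕ, oneLine n w = w1 ++ [3, 1, 2] ++ w2 ∧
        IsDecStair (w1 ++ [3]) ∧ IsIncStaircases w2)
      (∃ w1 w2 : List ℕ, oneLine n w = [2] ++ w1 ++ [3, 1] ++ w2 ∧
        IsDecStair (w1 ++ [3]) ∧ IsIncStaircases w2) := by
  classical
  set L := oneLine n w with hLdef
  have hlen : L.length = n := by simp [hLdef, oneLine]
  have hget : ∀ (i : ℕ) (hi : i < L.length), L[i] = (w ⟨i, hlen ▸ hi⟩ : ℕ) + 1 := by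
    intro i hi
    simp [hLdef, oneLine, List.getElem_ofFn]
  have hnd : L.Nodup := by
    rw [hLdef, oneLine, List.nodup_ofFn]
    intro i j hij
    simp only [add_left_inj] at hij
    exact w.injective (Fin.val_injective hij)
  have hone : ∀ x ∈ L, 1 ≤ x := by
    intro x hx
    simp only [hLdef, oneLine, List.mem_ofFn, Set.mem_range] at hx
    obtain ⟨i, rfl⟩ := hx
    omega
  have h2m : 2 ∈ L := by
    simp only [hLdef, oneLine, List.mem_ofFn, Set.mem_range]
    exact ⟨w.symm ⟨1, by omega⟩, by simp⟩
  have hch : L.Chain' (fun a b => a ≤ b + 1 ∨ (a = 3 ∧ b = 1)) := by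
    unfold List.Chain'
    rw [List.isChain_iff_getElem]
    intro i hi
    have hi1 : i + 1 < n := by omega
    have hA := hperm ⟨i, by omega⟩ hi1
    rw [hget i (by omega), hget (i+1) (by omega)]
    set A := (w ⟨i, by omega⟩ : ℕ)
    set B := (w ⟨i + 1, hi1⟩ : ℕ)
    unfold h334 at hA
    split at hA <;> omega
  -- find the 3-1 position
  rw [IsPermissible] at hnot
  push_neg at hnot
  obtain ⟨i, hi1, hviol⟩ := hnot
  have hA := hperm i hi1
  set A := (w i : ℕ) with hAd
  set B := (w ⟨(i : ℕ) + 1, hi1⟩ : ℕ) with hBd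
  have hAlt : A < n := (w i).isLt
  have hBlt : B < n := (w ⟨(i : ℕ) + 1, hi1⟩).isLt
  unfold hPet at hviol
  have hA2 : A = 2 ∧ B = 0 := by
    unfold h334 at hA
    split at hA <;> omega
  have hsplit : L = L.take i ++ 3 :: 1 :: L.drop ((i : ℕ) + 2) := by
    conv_lhs => rw [← List.take_append_drop (i : ℕ) L]
    congr 1
    rw [List.drop_eq_getElem_cons (by omega), List.drop_eq_getElem_cons (by omega)]
    rw [hget (i : ℕ) (by omega), hget ((i : ℕ) + 1) (by omega)]
    have e1 : (⟨(i : ℕ), by omega⟩ : Fin n) = i := rfl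
    rw [e1]
    rw [← hAd]
    have e2 : (w ⟨(i : ℕ) + 1, by omega⟩ : ℕ) = B := rfl
    rw [e2, hA2.1, hA2.2]
  rw [hsplit]
  exact listMain _ _ (hsplit ▸ hnd) (fun x hx => hone x (hsplit ▸ hx)) (hsplit ▸ h2m)
    (hsplit ▸ hch)
end
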